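/- Let A = (a_1,…,a_n) and B = (b_1,…,b_m) be integer strings with all entries at least 2, and set p = K(a_1,…,a_n), q = K(a_2,…,a_n), r = K(b_1,…,b_m), s = K(b_2,…,b_m). Let q* be the unique integer with 0 < q* < p and q·q* ≡ 1 (mod p). Then the pair (A, B) is complementary if and only if r = p and s = p − q*. -/

import Mathlib

/-- The negative continuant `K(a₁,…,aₙ)`, defined by `K() = 1`, `K(a) = a`, and
`K(a₁,a₂,…,aₙ) = a₁·K(a₂,…,aₙ) − K(a₃,…,aₙ)`. -/
def negCont : List ℤ → ℤ
  | [] => 1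
  | [a] => a
  | a :: b :: l => a * negCont (b :: l) - negCont l

/-- A 2-final expansion of a pair of integer strings: it transforms
`((a₁,…,aₙ),(b₁,…,bₘ))` into either `((a₁+1,a₂,…,aₙ),(b₁,…,bₘ,2))` or
`((2,a₁,…,aₙ),(b₁,…,bₘ₋₁,bₘ+1))`. -/
def TwoFinalExp : List ℤ × List ℤ → List ℤ × List ℤ → Prop := fun P Q =>
  (∃ (a : ℤ) (A B : List ℤ), P = (a :: A, B) ∧ Q = ((a + 1) :: A, B ++ [2])) ∨
  (∃ (A B : List ℤ) (b : ℤ), P = (A, B ++ [b]) ∧ Q = (2 :: A, B ++ [b + 1]))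

/-- A pair of integer strings is complementary if it is obtained from the pair
`((2),(2))` by a finite (possibly empty) sequence of 2-final expansions. -/
def Complementary (A B : List ℤ) : Prop :=
  Relation.ReflTransGen TwoFinalExp ([2], [2]) (A, B)

namespace NCAux

def F : List ℤ → ℤ × ℤ × ℤ × ℤ
  | [] => (1, 0, 0, 1)
  | a :: L => (a * (F L).1 - (F L).2.2.1, a * (F L).2.1 - (F L).2.2.2, (F L).1, (F L).2.1)

lemma negCont_cons (a : ℤ) (L : List ℤ) (h : L ≠ []) :
    negCont (a :: L) = a * negCont L - negCont L.tail := by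
  cases L with
  | nil => exact absurd rfl h
  | cons b M => rfl

theorem F_fst : ∀ (L : List ℤ), (F L).1 = negCont L
  | [] => rfl
  | [a] => by simp [F, negCont]
  | a :: b :: M => by
    have h1 := F_fst (b :: M)
    have h2 := F_fst M
    show a * (F (b :: M)).1 - (F M).1 = negCont (a :: b :: M)
    rw [h1, h2]; rfl

lemma F_z (a : ℤ) (L : List ℤ) : (F (a :: L)).2.2.1 = negCont L := by
  show (F L).1 = negCont L; exact F_fst L

lemma F_z' (L : List ℤ) (h : L ≠ []) : (F L).2.2.1 = negCont L.tail := by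
  cases L with
  | nil => exact absurd rfl h
  | cons a M => simpa using F_z a M

theorem F_append (L M : List ℤ) : F (L ++ M) =
    ((F L).1 * (F M).1 + (F L).2.1 * (F M).2.2.1,
     (F L).1 * (F M).2.1 + (F L).2.1 * (F M).2.2.2,
     (F L).2.2.1 * (F M).1 + (F L).2.2.2 * (F M).2.2.1,
     (F L).2.2.1 * (F M).2.1 + (F L).2.2.2 * (F M).2.2.2) := by
  induction L with
  | nil => simp [F]
  | cons a L ih =>
    show F (a :: (L ++ M)) = _
    rw [show ∀ N, F (a :: N) = (a * (F N).1 - (F N).2.2.1, a * (F N).2.1 - (F N).2.2.2,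
        (F N).1, (F N).2.1) from fun _ => rfl, ih,
        show F (a :: L) = (a * (F L).1 - (F L).2.2.1, a * (F L).2.1 - (F L).2.2.2,
        (F L).1, (F L).2.1) from rfl]
    refine Prod.ext ?_ (Prod.ext ?_ (Prod.ext ?_ ?_)) <;> simp <;> ring

theorem F_det : ∀ (L : List ℤ), (F L).1 * (F L).2.2.2 - (F L).2.1 * (F L).2.2.1 = 1
  | [] => rfl
  | a :: L => by
    have ih := F_det L
    show (a * (F L).1 - (F L).2.2.1) * (F L).2.1 - (a * (F L).2.1 - (F L).2.2.2) * (F L).1 = 1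
    linear_combination ih

theorem F_reverse : ∀ (L : List ℤ),
    F L.reverse = ((F L).1, -(F L).2.2.1, -(F L).2.1, (F L).2.2.2)
  | [] => by simp [F]
  | a :: L => by
    have ih := F_reverse L
    rw [List.reverse_cons, F_append, ih,
      show F [a] = (a, -1, 1, 0) by simp [F],
      show F (a :: L) = (a * (F L).1 - (F L).2.2.1, a * (F L).2.1 - (F L).2.2.2,
        (F L).1, (F L).2.1) from rfl]
    refine Prod.ext ?_ (Prod.ext ?_ (Prod.ext ?_ ?_)) <;> simp <;> ring

lemma negCont_reverse (L : List ℤ) : negCont L.reverse = negCont L := by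
  rw [← F_fst, F_reverse]; exact F_fst L

lemma F_y (L : List ℤ) (h : L ≠ []) : (F L).2.1 = -negCont L.dropLast := by
  have h1 : L.reverse ≠ [] := by simpa using h
  have h2 : -(F L).2.1 = negCont L.dropLast := by
    simpa [F_reverse, List.tail_reverse, negCont_reverse] using F_z' L.reverse h1
  linarith

/-- the key "determinant" congruence -/
lemma negCont_inv (L : List ℤ) (h : L ≠ []) :
    ∃ c : ℤ, negCont L.dropLast * negCont L.tail = 1 + negCont L * c := by
  refine ⟨-(F L).2.2.2, ?_⟩
  have hd := F_det L
  rw [F_y L h, F_z' L h, F_fst L] at hd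
  linarith [hd]

lemma negCont_concat (L : List ℤ) (h : L ≠ []) (b : ℤ) :
    negCont (L ++ [b]) = b * negCont L - negCont L.dropLast := by
  have := congrArg (fun x : ℤ × ℤ × ℤ × ℤ => x.1) (F_append L [b])
  simp only at this
  rw [F_fst, show F [b] = (b, -1, 1, 0) by simp [F], F_fst L, F_y L h] at this
  rw [this]; ring

lemma negCont_concat_succ (L : List ℤ) (b : ℤ) :
    negCont (L ++ [b + 1]) = negCont (L ++ [b]) + negCont L := by
  cases L with
  | nil => simp [negCont]
  | cons a M =>
    rw [negCont_concat _ (by simp) b, negCont_concat _ (by simp) (b + 1)]; ring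

lemma negCont_cons_succ (a : ℤ) (L : List ℤ) :
    negCont ((a + 1) :: L) = negCont (a :: L) + negCont L := by
  cases L with
  | nil => simp [negCont]
  | cons b M =>
    rw [negCont_cons (a + 1) (b :: M) (by simp), negCont_cons a (b :: M) (by simp)]
    ring

theorem negCont_pos : ∀ (L : List ℤ), (∀ x ∈ L, 2 ≤ x) →
    1 ≤ negCont L ∧ (L ≠ [] → negCont L.tail < negCont L)
  | [] => fun _ => ⟨le_refl 1, fun h => absurd rfl h⟩
  | a :: L => fun h => by
    have ih := negCont_pos L (fun x hx => h x (List.mem_cons_of_mem _ hx))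
    have ha : 2 ≤ a := h a List.mem_cons_self
    cases L with
    | nil => refine ⟨by simpa [negCont] using by linarith, fun _ => ?_⟩
             show negCont [] < negCont [a]
             simp [negCont]; linarith
    | cons b M =>
      have h1 : 1 ≤ negCont (b :: M) := ih.1
      have h2 : negCont M < negCont (b :: M) := by simpa using ih.2 (by simp)
      rw [negCont_cons _ _ (by simp)]
      constructor
      · simp only [List.tail_cons]; nlinarith
      · intro _; simp only [List.tail_cons]; nlinarith

lemma negCont_one_le (L : List ℤ) (h : ∀ x ∈ L, 2 ≤ x) : 1 ≤ negCont L :=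
  (negCont_pos L h).1

lemma negCont_tail_lt (L : List ℤ) (hne : L ≠ []) (h : ∀ x ∈ L, 2 ≤ x) :
    negCont L.tail < negCont L := (negCont_pos L h).2 hne

lemma negCont_dropLast_lt (L : List ℤ) (hne : L ≠ []) (h : ∀ x ∈ L, 2 ≤ x) :
    negCont L.dropLast < negCont L := by
  have h1 : L.reverse ≠ [] := by simpa using hne
  have h2 := negCont_tail_lt L.reverse h1 (fun x hx => h x (by simpa using hx))
  rwa [List.tail_reverse, negCont_reverse, negCont_reverse] at h2

def Inv (A B : List ℤ) : Prop :=
  A ≠ [] ∧ B ≠ [] ∧ negCont B = negCont A ∧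
    negCont B.dropLast = negCont A - negCont A.tail

lemma step_inv {P Q : List ℤ × List ℤ} (h : TwoFinalExp P Q) (hP : Inv P.1 P.2) :
    Inv Q.1 Q.2 := by
  rcases h with ⟨a, A, B, hPe, hQe⟩ | ⟨A, B, b, hPe, hQe⟩
  · subst hPe; subst hQe
    obtain ⟨hAne, hBne, hr, ht⟩ := hP
    replace hBne : B ≠ [] := hBne
    replace hr : negCont B = negCont (a :: A) := hr
    replace ht : negCont B.dropLast = negCont (a :: A) - negCont A := ht
    show Inv ((a + 1) :: A) (B ++ [2])
    refine ⟨by simp, by simp, ?_, ?_⟩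
    · show negCont (B ++ [2]) = negCont ((a + 1) :: A)
      rw [negCont_concat B hBne 2, negCont_cons_succ a A]
      linarith
    · show negCont (B ++ [2]).dropLast = negCont ((a + 1) :: A) - negCont A
      rw [List.dropLast_concat, negCont_cons_succ a A]
      linarith
  · subst hPe; subst hQe
    obtain ⟨hAne, hBne, hr, ht⟩ := hP
    replace hAne : A ≠ [] := hAne
    replace hr : negCont (B ++ [b]) = negCont A := hr
    replace ht : negCont ((B ++ [b]).dropLast) = negCont A - negCont A.tail := ht
    rw [List.dropLast_concat] at ht
    show Inv (2 :: A) (B ++ [b + 1])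
    refine ⟨by simp, by simp, ?_, ?_⟩
    · show negCont (B ++ [b + 1]) = negCont (2 :: A)
      rw [negCont_concat_succ B b, negCont_cons 2 A hAne]
      linarith
    · show negCont (B ++ [b + 1]).dropLast = negCont (2 :: A) - negCont A
      rw [List.dropLast_concat, negCont_cons 2 A hAne]
      linarith

lemma forward {A B : List ℤ} (h : Complementary A B) : Inv A B := by
  have key : ∀ P : List ℤ × List ℤ,
      Relation.ReflTransGen TwoFinalExp ([2], [2]) P → Inv P.1 P.2 := by
    intro P h
    induction h with
    | refl =>
      show Inv [2] [2]
      refine ⟨by simp, by simp, rfl, by simp [negCont]⟩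
    | tail _ hstep ih => exact step_inv hstep ih
  exact key (A, B) h

lemma eq_of_small {p x y k : ℤ} (hx1 : 1 ≤ x) (hx2 : x < p) (hy1 : 1 ≤ y)
    (hy2 : y < p) (h : x - y = p * k) : x = y := by
  have hp : 0 < p := by linarith
  rcases lt_trichotomy k 0 with hk | hk | hk
  · have h2 : 0 ≤ p * (-k - 1) := mul_nonneg hp.le (by linarith)
    nlinarith
  · rw [hk, mul_zero] at h; linarith
  · have h2 : 0 ≤ p * (k - 1) := mul_nonneg hp.le (by linarith)
    nlinarith

lemma build : ∀ (n : ℕ) (A B : List ℤ), A.length + B.length ≤ n →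
    (∀ a ∈ A, 2 ≤ a) → (∀ b ∈ B, 2 ≤ b) → Inv A B → Complementary A B := by
  intro n
  induction n with
  | zero =>
    intro A B hlen _ _ hinv
    obtain ⟨hAne, -, -, -⟩ := hinv
    cases A with
    | nil => exact absurd rfl hAne
    | cons a A' => simp at hlen
  | succ n ih =>
    intro A B hlen hA hB hinv
    obtain ⟨hAne, hBne, hr, ht⟩ := hinv
    obtain ⟨a, A', rfl⟩ := List.exists_cons_of_ne_nil hAne
    have hBC : B.dropLast ++ [B.getLast hBne] = B := List.dropLast_append_getLast hBne
    set C := B.dropLast with hCdef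
    set b := B.getLast hBne with hbdef
    have hb2 : 2 ≤ b := hB b (List.getLast_mem hBne)
    have ha2 : 2 ≤ a := hA a List.mem_cons_self
    have hA'e : ∀ x ∈ A', 2 ≤ x := fun x hx => hA x (List.mem_cons_of_mem _ hx)
    have hCe : ∀ x ∈ C, 2 ≤ x := fun x hx => hB x (List.dropLast_subset B hx)
    have hq1 : 1 ≤ negCont A' := negCont_one_le A' hA'e
    have hqp : negCont A' < negCont (a :: A') := by
      have h0 := negCont_tail_lt (a :: A') (by simp) hA
      simpa using h0
    simp only [List.tail_cons] at ht
    have hlB : B.length = C.length + 1 := by rw [← hBC]; simp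
    rcases eq_or_lt_of_le ha2 with ha | ha3
    · -- a = 2
      rcases eq_or_ne A' [] with rfl | hA'ne
      · -- A = [2] : base case
        have htC : negCont C = 1 := by
          rw [← ha] at ht
          simpa [negCont] using ht
        have hCnil : C = [] := by
          cases hh : C with
          | nil => rfl
          | cons c C' =>
            rw [hh] at htC hCe
            have h1 := negCont_tail_lt (c :: C') (by simp) hCe
            have h2 : 1 ≤ negCont ((c :: C').tail) :=
              negCont_one_le _ (fun x hx => hCe x (List.mem_of_mem_tail hx))
            linarith
        have hb2' : b = 2 := by
          have h1 : negCont B = b := by rw [← hBC, hCnil]; simp [negCont]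
          have h2 : negCont [(2:ℤ)] = 2 := by simp [negCont]
          rw [← ha] at hr
          rw [h1, h2] at hr
          exact hr
        have hB2 : B = [2] := by rw [← hBC, hCnil, hb2']; rfl
        rw [hB2, ← ha]
        exact Relation.ReflTransGen.refl
      · -- A' ≠ [] : reverse move 2
        have hAt1 : 1 ≤ negCont A'.tail :=
          negCont_one_le _ (fun x hx => hA'e x (List.mem_of_mem_tail hx))
        have hAtq : negCont A'.tail < negCont A' := negCont_tail_lt A' hA'ne hA'e
        have hq2 : 2 ≤ negCont A' := by linarith
        have hpq : negCont (a :: A') = 2 * negCont A' - negCont A'.tail := by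
          rw [← ha]; exact negCont_cons 2 A' hA'ne
        have hb3 : 3 ≤ b := by
          rcases eq_or_ne C [] with hCnil | hCne
          · have h1 : negCont B = b := by rw [← hBC, hCnil]; simp [negCont]
            linarith [hr, hpq, hq2, hAtq, h1]
          · by_contra h0
            have hb2' : b = 2 := by omega
            have hrB : negCont B = b * negCont C - negCont C.dropLast := by
              conv_lhs => rw [← hBC]
              exact negCont_concat C hCne b
            have hCd1 : 1 ≤ negCont C.dropLast :=
              negCont_one_le _ (fun x hx => hCe x (List.dropLast_subset C hx))
            rw [hb2'] at hrB
            linarith [hr, ht, hpq, hAt1, hrB, hCd1]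
        have hstep : TwoFinalExp (A', C ++ [b - 1]) (a :: A', B) := by
          right
          exact ⟨A', C, b - 1, rfl, by rw [sub_add_cancel, hBC, ← ha]⟩
        have hcs := negCont_concat_succ C (b - 1)
        rw [sub_add_cancel, hBC] at hcs
        have hr0 : negCont (C ++ [b - 1]) = negCont A' := by linarith [hr, ht, hcs]
        have ht0 : negCont ((C ++ [b - 1]).dropLast) = negCont A' - negCont A'.tail := by
          rw [List.dropLast_concat]
          linarith [ht, hpq]
        refine Relation.ReflTransGen.tail
          (ih A' (C ++ [b - 1]) ?_ hA'e ?_ ⟨hA'ne, by simp, hr0, ht0⟩) hstep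
        · have h1 : (C ++ [b - 1]).length = C.length + 1 := by simp
          simp only [List.length_cons] at hlen
          omega
        · intro x hx
          rcases List.mem_append.mp hx with hx | hx
          · exact hCe x hx
          · simp only [List.mem_singleton] at hx
            omega
    · -- a ≥ 3 : reverse move 1
      have hp2q : 2 * negCont A' < negCont (a :: A') := by
        cases hh : A' with
        | nil =>
          have e1 : negCont ([] : List ℤ) = 1 := rfl
          have e2 : negCont [a] = a := by simp [negCont]
          rw [e1, e2]
          linarith
        | cons x M =>
          rw [hh] at hq1 hA'e
          rw [negCont_cons a (x :: M) (by simp)]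
          have h1 : negCont ((x :: M).tail) < negCont (x :: M) :=
            negCont_tail_lt _ (by simp) hA'e
          nlinarith [mul_nonneg (by linarith : (0:ℤ) ≤ a - 3)
            (by linarith : (0:ℤ) ≤ negCont (x :: M))]
      have ht2 : 2 ≤ negCont C := by linarith [ht, hq1, hp2q]
      have hCne : C ≠ [] := by
        intro h0
        rw [h0] at ht2
        norm_num [negCont] at ht2
      have hrB : negCont B = b * negCont C - negCont C.dropLast := by
        conv_lhs => rw [← hBC]
        exact negCont_concat C hCne b
      have hCd1 : 1 ≤ negCont C.dropLast :=
        negCont_one_le _ (fun x hx => hCe x (List.dropLast_subset C hx))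
      have hCdlt : negCont C.dropLast < negCont C := negCont_dropLast_lt C hCne hCe
      have hb2' : b = 2 := by
        by_contra h0
        have hb3 : 3 ≤ b := by omega
        have h3t : 3 * negCont C ≤ b * negCont C :=
          mul_le_mul_of_nonneg_right hb3 (by linarith)
        linarith [hrB, hr, ht, hCdlt, hCd1, hp2q]
      have hstep : TwoFinalExp ((a - 1) :: A', C) (a :: A', B) := by
        left
        refine ⟨a - 1, A', C, rfl, ?_⟩
        rw [sub_add_cancel, ← hb2', hBC]
      have hps : negCont (a :: A') = negCont ((a - 1) :: A') + negCont A' := by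
        have h0 := negCont_cons_succ (a - 1) A'
        rwa [sub_add_cancel] at h0
      have hr0 : negCont C = negCont ((a - 1) :: A') := by linarith [ht, hps]
      have ht0 : negCont C.dropLast =
          negCont ((a - 1) :: A') - negCont (((a - 1) :: A').tail) := by
        simp only [List.tail_cons]
        rw [hb2'] at hrB
        linarith [hr, ht, hrB, hps]
      refine Relation.ReflTransGen.tail
        (ih ((a - 1) :: A') C ?_ ?_ hCe ⟨by simp, hCne, hr0, ht0⟩) hstep
      · simp only [List.length_cons] at hlen ⊢
        omega
      · intro x hx
        rcases List.mem_cons.mp hx with rfl | hx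
        · omega
        · exact hA'e x hx

end NCAux

/-- Let `A`, `B` be integer strings with all entries at least 2, and set
`p = K(A)`, `q = K(A.tail)`, `r = K(B)`, `s = K(B.tail)`.  Let `q*` be the unique
integer with `0 < q* < p` and `q·q* ≡ 1 (mod p)`.  Then `(A, B)` is complementary
if and only if `r = p` and `s = p − q*`. -/
theorem stmt6 (A B : List ℤ) (hA : ∀ a ∈ A, 2 ≤ a) (hB : ∀ b ∈ B, 2 ≤ b)
    (qs : ℤ) (hqs0 : 0 < qs) (hqsp : qs < negCont A)
    (hqs1 : negCont A.tail * qs ≡ 1 [ZMOD negCont A]) :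
    Complementary A B ↔
      negCont B = negCont A ∧ negCont B.tail = negCont A - qs := by
  obtain ⟨d, hd⟩ := Int.modEq_iff_dvd.mp hqs1
  constructor
  · intro h
    obtain ⟨hAne, hBne, hr, ht⟩ := NCAux.forward h
    refine ⟨hr, ?_⟩
    obtain ⟨c, hc⟩ := NCAux.negCont_inv B hBne
    rw [hr, ht] at hc
    have hs1 : 1 ≤ negCont B.tail :=
      NCAux.negCont_one_le _ (fun x hx => hB x (List.mem_of_mem_tail hx))
    have hsp : negCont B.tail < negCont A := hr ▸ NCAux.negCont_tail_lt B hBne hB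
    refine NCAux.eq_of_small
      (k := qs * (negCont B.tail - c - negCont A.tail - d)
        + d * (negCont B.tail - (negCont A - qs)))
      hs1 hsp (by linarith) (by linarith) ?_
    linear_combination (-qs) * hc + (negCont B.tail - (negCont A - qs) - qs) * hd
  · rintro ⟨hr, hs⟩
    have hp2 : 2 ≤ negCont A := by omega
    have hAne : A ≠ [] := by
      intro h0; rw [h0] at hp2; norm_num [negCont] at hp2
    have hBne : B ≠ [] := by
      intro h0; rw [h0] at hr; simp [negCont] at hr; omega
    obtain ⟨c, hc⟩ := NCAux.negCont_inv B hBne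
    rw [hr, hs] at hc
    have ht1 : 1 ≤ negCont B.dropLast :=
      NCAux.negCont_one_le _ (fun x hx => hB x (List.dropLast_subset B hx))
    have htp : negCont B.dropLast < negCont A := hr ▸ NCAux.negCont_dropLast_lt B hBne hB
    have hq1 : 1 ≤ negCont A.tail :=
      NCAux.negCont_one_le _ (fun x hx => hA x (List.mem_of_mem_tail hx))
    have hqlt : negCont A.tail < negCont A := NCAux.negCont_tail_lt A hAne hA
    have ht : negCont B.dropLast = negCont A - negCont A.tail := by
      refine NCAux.eq_of_small
        (k := negCont A.tail * (negCont B.dropLast - c - qs - d)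
          + d * (negCont B.dropLast - (negCont A - negCont A.tail)))
        ht1 htp (by linarith) (by linarith) ?_
      linear_combination (-(negCont A.tail)) * hc
        + (negCont B.dropLast - (negCont A - negCont A.tail) - negCont A.tail) * hd
    exact NCAux.build (A.length + B.length) A B le_rfl hA hB ⟨hAne, hBne, hr, ht⟩
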